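/- (Splitting Lemma) Let K be a finite-rank torsion-free abelian group, T a hyperbolic automorphism of K, and L a full-rank lattice in K with T(L) ⊆ L and ⋃_{i∈ℤ} Tⁱ(L) = K. Let K_d = ⋂_{i∈ℤ} Tⁱ(L). Then there exist a finite-index subgroup K' of K containing K_d, invariant under T and T⁻¹, and a subgroup K_c of K', invariant under T and T⁻¹, such that K' = K_d ⊕ K_c (internal direct sum), and both quotients K/K_d and K/K_c are torsion-free. -/

import Mathlib

section VSetup

/-- The additive automorphism of `V` underlying a linear automorphism. -/
def linToAddAut {V : Type*} [AddCommGroup V] [Module ℝ V] (T : V ≃ₗ[ℝ] V) :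
    AddAut V := T.toAddEquiv

/-- `L` is a full-rank lattice in the finite-dimensional real vector space `V`
(which plays the role of `K ⊗ ℝ`): `L` is the `ℤ`-span of an `ℝ`-basis of `V`. -/
def IsLatticeIn (V : Type*) [NormedAddCommGroup V] [NormedSpace ℝ V]
    (L : AddSubgroup V) : Prop :=
  ∃ b : Module.Basis (Fin (Module.finrank ℝ V)) ℝ V, L = AddSubgroup.closure (Set.range b)

/-- `max_{a ∈ A} dist(Tⁱa, W)`. -/
noncomputable def maxDist {V : Type*} [NormedAddCommGroup V] [NormedSpace ℝ V]
    (T : V ≃ₗ[ℝ] V) (W : Submodule ℝ V) (A : Finset V) (i : ℤ) : ℝ :=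
  sSup ((fun a => Metric.infDist ((T ^ i) a) (W : Set V)) '' ↑A)

end VSetup

open Polynomial UniqueFactorizationMonoid

section AuxSplitting

theorem SplitAux.gaussLift (Q : Polynomial ℤ) (hQ : Q.Monic) (p : Polynomial ℚ) (hp : p.Monic)
    (hdvd : p ∣ Q.map (algebraMap ℤ ℚ)) : ∃ P : Polynomial ℤ, P.Monic ∧ P.map (algebraMap ℤ ℚ) = p := by
  obtain ⟨P, hP⟩ := IsIntegrallyClosed.eq_map_mul_C_of_dvd (R := ℤ) ℚ hQ hdvd
  rw [hp.leadingCoeff, map_one, mul_one] at hP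
  have hinj : Function.Injective (algebraMap ℤ ℚ) := fun a b h => by exact_mod_cast h
  exact ⟨P, Polynomial.monic_of_injective hinj (hP ▸ hp), hP⟩

theorem SplitAux.predDvd (Q : Polynomial ℤ) (hQ : Q.Monic) (hQ0 : Q.coeff 0 = 1 ∨ Q.coeff 0 = -1)
    (p : Polynomial ℚ) (hp : p.Monic) (hdvd : p ∣ Q.map (algebraMap ℤ ℚ)) :
    p.coeff 0 = 1 ∨ p.coeff 0 = -1 := by
  have hinj : Function.Injective (algebraMap ℤ ℚ) := fun a b h => by exact_mod_cast h
  obtain ⟨r, hr⟩ := hdvd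
  have hrm : r.Monic := by
    have := hQ.map (algebraMap ℤ ℚ)
    rw [hr] at this
    exact hp.of_mul_monic_left this
  obtain ⟨P, hPm, hPe⟩ := SplitAux.gaussLift Q hQ p hp ⟨r, hr⟩
  obtain ⟨R, hRm, hRe⟩ := SplitAux.gaussLift Q hQ r hrm (Dvd.intro_left p hr.symm)
  have : Q = P * R := by
    apply Polynomial.map_injective _ hinj
    rw [Polynomial.map_mul, hPe, hRe, hr]
  have h0 : Q.coeff 0 = P.coeff 0 * R.coeff 0 := by rw [this, Polynomial.mul_coeff_zero]
  have hunit : IsUnit (P.coeff 0) := by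
    rcases hQ0 with h | h <;> rw [h] at h0
    · exact IsUnit.of_mul_eq_one _ h0.symm
    · exact IsUnit.of_mul_eq_one (-R.coeff 0) (by linarith [h0])
  have := Int.isUnit_iff.mp hunit
  have hc : (P.coeff 0 : ℚ) = p.coeff 0 := by rw [← hPe, Polynomial.coeff_map]; rfl
  rcases this with h | h <;> [left; right] <;> rw [← hc, h] <;> norm_num

theorem SplitAux.unit_part (f : Polynomial ℚ) (hf : f.Monic) :
    ∃ g h : Polynomial ℚ, g.Monic ∧ g * h = f ∧ IsCoprime g h ∧
      (g.coeff 0 = 1 ∨ g.coeff 0 = -1) ∧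
      (∀ m : Polynomial ℚ, m ≠ 0 → m ∣ f →
        (∀ p : Polynomial ℚ, p.Monic → Irreducible p → p ∣ m →
          p.coeff 0 = 1 ∨ p.coeff 0 = -1) → m ∣ g) := by
  classical
  have hf0 : f ≠ 0 := hf.ne_zero
  set S := normalizedFactors f with hS
  set pred : Polynomial ℚ → Prop := fun p => p.coeff 0 = 1 ∨ p.coeff 0 = -1 with hpred
  set g := (S.filter pred).prod with hg
  set h := (S.filter (fun p => ¬ pred p)).prod with hh
  have hmonS : ∀ p ∈ S, p.Monic := by
    intro p hp
    have h1 := normalize_normalized_factor p hp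
    have h2 : p ≠ 0 := (irreducible_of_normalized_factor p hp).ne_zero
    have := Polynomial.monic_normalize (p := p) h2
    rwa [h1] at this
  have hmprod : ∀ t : Multiset (Polynomial ℚ), (∀ p ∈ t, p.Monic) → t.prod.Monic := by
    intro t ht
    have := Polynomial.monic_multiset_prod_of_monic t (fun p => p) ht
    simpa using this
  have hgm : g.Monic := hmprod _ (fun p hp => hmonS p (Multiset.mem_of_mem_filter hp))
  have hhm : h.Monic := hmprod _ (fun p hp => hmonS p (Multiset.mem_of_mem_filter hp))
  have hprodS : S.prod = f := by
    have ha : Associated S.prod f := prod_normalizedFactors hf0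
    have hSm : S.prod.Monic := hmprod _ hmonS
    exact Polynomial.eq_of_monic_of_associated hSm hf ha
  have hgh : g * h = f := by
    rw [hg, hh, ← Multiset.prod_add, Multiset.filter_add_not, hprodS]
  have hcop : IsCoprime g h := by
    have hd : ∀ p : Polynomial ℚ, Prime p → p ∣ g → p ∣ h → False := by
      intro p hp hpg hph
      obtain ⟨a, ha, hpa⟩ := hp.exists_mem_multiset_dvd hpg
      obtain ⟨b, hb, hpb⟩ := hp.exists_mem_multiset_dvd hph
      rw [Multiset.mem_filter] at ha hb
      have hab : Associated a b := by
        have h1 : Associated p a := (hp.irreducible.associated_of_dvd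
          (irreducible_of_normalized_factor a ha.1) hpa)
        have h2 : Associated p b := (hp.irreducible.associated_of_dvd
          (irreducible_of_normalized_factor b hb.1) hpb)
        exact h1.symm.trans h2
      have : a = b := by
        have := normalize_eq_normalize hab.dvd hab.symm.dvd
        rwa [normalize_normalized_factor a ha.1, normalize_normalized_factor b hb.1] at this
      exact hb.2 (this ▸ ha.2)
    by_cases hg0 : g = 0
    · exact absurd hg0 hgm.ne_zero
    have hgcd : IsUnit (EuclideanDomain.gcd g h) := by
      by_contra hu
      have hne : EuclideanDomain.gcd g h ≠ 0 := by
        intro h0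
        exact hg0 ((EuclideanDomain.gcd_eq_zero_iff.mp h0).1)
      obtain ⟨p, hpirr, hpd⟩ := WfDvdMonoid.exists_irreducible_factor hu hne
      exact hd p ((irreducible_iff_prime).mp hpirr)
        (hpd.trans (EuclideanDomain.gcd_dvd_left g h)) (hpd.trans (EuclideanDomain.gcd_dvd_right g h))
    obtain ⟨u, hu⟩ := hgcd.exists_left_inv
    refine ⟨u * EuclideanDomain.gcdA g h, u * EuclideanDomain.gcdB g h, ?_⟩
    have := EuclideanDomain.gcd_eq_gcd_ab g h
    calc u * EuclideanDomain.gcdA g h * g + u * EuclideanDomain.gcdB g h * h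
        = u * (g * EuclideanDomain.gcdA g h + h * EuclideanDomain.gcdB g h) := by ring
      _ = u * EuclideanDomain.gcd g h := by rw [← this]
      _ = 1 := hu
  have hg0coeff : g.coeff 0 = 1 ∨ g.coeff 0 = -1 := by
    have : g.coeff 0 = ((S.filter pred).map (fun p => p.coeff 0)).prod := by
      rw [hg, Polynomial.coeff_zero_eq_eval_zero, Polynomial.eval_multiset_prod]
      congr 1
      exact Multiset.map_congr rfl (fun p _ => (Polynomial.coeff_zero_eq_eval_zero p).symm)
    rw [this]
    refine Multiset.prod_induction (fun x => x = 1 ∨ x = -1) _ ?_ (Or.inl rfl) ?_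
    · rintro a b (rfl | rfl) (rfl | rfl) <;> simp
    · intro x hx
      obtain ⟨p, hp, rfl⟩ := Multiset.mem_map.mp hx
      exact (Multiset.mem_filter.mp hp).2
  refine ⟨g, h, hgm, hgh, hcop, hg0coeff, ?_⟩
  intro m hm0 hmf hpm
  have h1 : normalizedFactors m ≤ S := (dvd_iff_normalizedFactors_le_normalizedFactors hm0 hf0).mp hmf
  have h2 : normalizedFactors m ≤ S.filter pred := by
    rw [Multiset.le_filter]
    refine ⟨h1, fun p hp => ?_⟩
    exact hpm p (by
      have h1' := normalize_normalized_factor p hp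
      have h2' : p ≠ 0 := (irreducible_of_normalized_factor p hp).ne_zero
      have := Polynomial.monic_normalize (p := p) h2'
      rwa [h1'] at this) (irreducible_of_normalized_factor p hp) (dvd_of_mem_normalizedFactors hp)
  calc m ∣ (normalizedFactors m).prod := (prod_normalizedFactors hm0).symm.dvd
    _ ∣ (S.filter pred).prod := Multiset.prod_dvd_prod_of_le h2

variable {V : Type*} [AddCommGroup V] [Module ℝ V] (T : V ≃ₗ[ℝ] V)

theorem SplitAux.equivpow_mem (S : AddSubgroup V) (E : V ≃ₗ[ℝ] V) (hS : ∀ v ∈ S, E v ∈ S) :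
    ∀ n : ℕ, ∀ w ∈ S, (E ^ n) w ∈ S := by
  intro n
  induction n with
  | zero => intro w hw; simpa using hw
  | succ n ih =>
    intro w hw
    rw [pow_succ']
    exact hS _ (ih w hw)

theorem SplitAux.Tpow_mem (S : AddSubgroup V) (hS : ∀ v ∈ S, T v ∈ S) :
    ∀ n : ℕ, ∀ w ∈ S, ((T : V →ₗ[ℝ] V) ^ n) w ∈ S := by
  intro n
  induction n with
  | zero => intro w hw; simpa using hw
  | succ n ih =>
    intro w hw
    rw [pow_succ, Module.End.mul_apply]
    exact ih _ (by simpa using hS w hw)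

/-- integer polynomial applied to T preserves a T-invariant subgroup -/
theorem SplitAux.evZ_mem (S : AddSubgroup V) (hS : ∀ v ∈ S, T v ∈ S) (Z : Polynomial ℤ)
    {v : V} (hv : v ∈ S) :
    (aeval (T : V →ₗ[ℝ] V) (Z.map (Int.castRingHom ℝ))) v ∈ S := by
  induction Z using Polynomial.induction_on' with
  | add p q hp hq => rw [Polynomial.map_add, map_add]; exact S.add_mem hp hq
  | monomial n c =>
    rw [Polynomial.map_monomial, Polynomial.aeval_monomial]
    have : ((algebraMap ℝ (Module.End ℝ V)) ((Int.castRingHom ℝ) c) *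
        ((T : V →ₗ[ℝ] V)) ^ n) v = (c : ℝ) • (((T : V →ₗ[ℝ] V)) ^ n) v := by
      simp [Module.algebraMap_end_apply, Int.cast_smul_eq_zsmul]
    rw [this, Int.cast_smul_eq_zsmul]
    exact zsmul_mem (SplitAux.Tpow_mem T S hS n v hv) c

theorem SplitAux.evZ_restrict (M : Submodule ℤ V)
    (hM : ∀ v ∈ M, ((T : V →ₗ[ℝ] V).restrictScalars ℤ) v ∈ M) (Z : Polynomial ℤ) (x : M) :
    (aeval (T : V →ₗ[ℝ] V) (Z.map (Int.castRingHom ℝ))) ↑x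
      = ↑((aeval (((T : V →ₗ[ℝ] V).restrictScalars ℤ).restrict hM) Z) x) := by
  set φ := ((T : V →ₗ[ℝ] V).restrictScalars ℤ).restrict hM with hφ
  have hpow : ∀ (n : ℕ) (y : M), (((T : V →ₗ[ℝ] V)) ^ n) ↑y = ↑((φ ^ n) y) := by
    intro n
    induction n with
    | zero => intro y; simp
    | succ n ih =>
      intro y
      rw [pow_succ, pow_succ, Module.End.mul_apply, Module.End.mul_apply]
      have hy : ((T : V →ₗ[ℝ] V)) ↑y = ↑(φ y) := rfl
      rw [hy, ih (φ y)]
  induction Z using Polynomial.induction_on' with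
  | add p q hp hq =>
    push_cast [Polynomial.map_add, map_add, LinearMap.add_apply]
    rw [hp, hq]
  | monomial n c =>
    rw [Polynomial.map_monomial, Polynomial.aeval_monomial, Polynomial.aeval_monomial]
    simp only [Module.algebraMap_end_apply, Module.End.mul_apply, eq_intCast, Int.cast_id]
    rw [hpow n x, Int.cast_smul_eq_zsmul]
    rfl

end AuxSplitting
theorem splitting_lemma {V : Type*} [NormedAddCommGroup V] [NormedSpace ℝ V]
    [FiniteDimensional ℝ V] (T : V ≃ₗ[ℝ] V) (K L : AddSubgroup V)
    (hTK : ∀ v : V, v ∈ K ↔ T v ∈ K) (hTL : ∀ v ∈ L, T v ∈ L)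
    (hLlat : IsLatticeIn V L) (hLK : L ≤ K)
    (htor : ∀ k ∈ K, ∃ n : ℕ, 0 < n ∧ n • k ∈ L)
    (heig : ∀ z : ℂ, (((T : V →ₗ[ℝ] V).charpoly).map (algebraMap ℝ ℂ)).IsRoot z →
      ‖z‖ ≠ 1)
    (hunion : ∀ k ∈ K, ∃ i : ℤ, (T ^ i) k ∈ L)
    (Kd : AddSubgroup V)
    (hKd : Kd = ⨅ i : ℤ, AddSubgroup.comap ((T ^ i).toLinearMap).toAddMonoidHom L) :
    ∃ K' Kc : AddSubgroup V,
      Kd ≤ K' ∧ K' ≤ K ∧ Kc ≤ K' ∧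
      (K'.addSubgroupOf K).index ≠ 0 ∧
      (∀ v ∈ K', T v ∈ K' ∧ T.symm v ∈ K') ∧
      (∀ v ∈ Kc, T v ∈ Kc ∧ T.symm v ∈ Kc) ∧
      Kd ⊓ Kc = ⊥ ∧ Kd ⊔ Kc = K' ∧
      (∀ k ∈ K, ∀ n : ℕ, n ≠ 0 → n • k ∈ Kd → k ∈ Kd) ∧
      (∀ k ∈ K, ∀ n : ℕ, n ≠ 0 → n • k ∈ Kc → k ∈ Kc) := by
  classical
  obtain ⟨bas, hbL⟩ := hLlat
  -- membership in Kd
  have hKdmem : ∀ v : V, v ∈ Kd ↔ ∀ i : ℤ, (T ^ i) v ∈ L := by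
    intro v
    rw [hKd]
    simp only [AddSubgroup.mem_iInf, AddSubgroup.mem_comap]
    rfl
  have hKdL : Kd ≤ L := by
    intro v hv
    have := (hKdmem v).1 hv 0
    simpa using this
  have hTKd : ∀ v ∈ Kd, T v ∈ Kd := by
    intro v hv
    rw [hKdmem]
    intro i
    have := (hKdmem v).1 hv (i + 1)
    rwa [zpow_add_one] at this
  have hTKd' : ∀ v ∈ Kd, T.symm v ∈ Kd := by
    intro v hv
    rw [hKdmem]
    intro i
    have := (hKdmem v).1 hv (i - 1)
    rwa [zpow_sub_one] at this
  have hTsymmK : ∀ v ∈ K, T.symm v ∈ K := by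
    intro v hv
    exact (hTK (T.symm v)).mpr (by simpa using hv)
  have hKdK : Kd ≤ K := le_trans hKdL hLK
  -- module setup
  set Ld : Submodule ℤ V := AddSubgroup.toIntSubmodule L with hLdd
  set KdM : Submodule ℤ V := AddSubgroup.toIntSubmodule Kd with hKdMd
  have hLdspan : Ld = Submodule.span ℤ (Set.range bas) := by
    rw [hLdd, hbL, ← Submodule.span_int_eq_addSubgroupClosure]
    rfl
  haveI hLdfin : Module.Finite ℤ ↥Ld := by
    rw [hLdspan]
    exact Module.Finite.span_of_finite ℤ (Set.finite_range bas)
  have hKdMle : KdM ≤ Ld := hKdL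
  haveI hKdMfin : Module.Finite ℤ ↥KdM := by
    haveI : IsNoetherian ℤ ↥Ld := isNoetherian_of_isNoetherianRing_of_finite ℤ ↥Ld
    have hfg : (Submodule.comap Ld.subtype KdM).FG := IsNoetherian.noetherian _
    have e : ↥(Submodule.comap Ld.subtype KdM) ≃ₗ[ℤ] ↥KdM :=
      Submodule.comapSubtypeEquivOfLe hKdMle
    haveI : Module.Finite ℤ ↥(Submodule.comap Ld.subtype KdM) :=
      Module.Finite.iff_fg.mpr hfg
    exact Module.Finite.equiv e
  haveI hVnz : Module.IsTorsionFree ℤ V := by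
    haveI := IsAddTorsionFree.of_isTorsionFree ℝ V
    infer_instance
  haveI hKdMfree : Module.Free ℤ ↥KdM := Module.free_of_finite_type_torsion_free'
  haveI hLdfree : Module.Free ℤ ↥Ld := Module.free_of_finite_type_torsion_free'
  -- restricted endomorphisms
  have hmapKdM : ∀ v ∈ KdM, ((T : V →ₗ[ℝ] V).restrictScalars ℤ) v ∈ KdM := by
    intro v hv
    exact hTKd v hv
  have hmapKdM' : ∀ v ∈ KdM, ((T.symm : V →ₗ[ℝ] V).restrictScalars ℤ) v ∈ KdM := by
    intro v hv
    exact hTKd' v hv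
  have hmapLd : ∀ v ∈ Ld, ((T : V →ₗ[ℝ] V).restrictScalars ℤ) v ∈ Ld := by
    intro v hv
    exact hTL v hv
  set φ := (((T : V →ₗ[ℝ] V)).restrictScalars ℤ).restrict hmapKdM with hφdef
  set ψ := (((T.symm : V →ₗ[ℝ] V)).restrictScalars ℤ).restrict hmapKdM' with hψdef
  have hφψ : φ ∘ₗ ψ = LinearMap.id := by
    apply LinearMap.ext
    intro x
    apply Subtype.ext
    simp [hφdef, hψdef]
  set q := LinearMap.charpoly φ with hqdef
  have hqmonic : q.Monic := LinearMap.charpoly_monic φ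
  have hq0 : q.coeff 0 = 1 ∨ q.coeff 0 = -1 := by
    have hdet : LinearMap.det φ * LinearMap.det ψ = 1 := by
      rw [← LinearMap.det_comp, hφψ, LinearMap.det_id]
    have hdu : IsUnit (LinearMap.det φ) := IsUnit.of_mul_eq_one _ hdet
    have hds := LinearMap.det_eq_sign_charpoly_coeff φ
    have hcu : IsUnit (q.coeff 0) := by
      rw [hds] at hdu
      exact isUnit_of_mul_isUnit_right hdu
    exact Int.isUnit_iff.mp hcu
  have hqkill : ∀ v ∈ Kd, (aeval ((T : V →ₗ[ℝ] V)) (q.map (Int.castRingHom ℝ))) v = 0 := by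
    intro v hv
    have h1 := SplitAux.evZ_restrict T KdM hmapKdM q ⟨v, hv⟩
    rw [h1, ← hφdef]
    rw [LinearMap.aeval_self_charpoly φ]
    rfl
  -- charpoly on the lattice L
  set φL := (((T : V →ₗ[ℝ] V)).restrictScalars ℤ).restrict hmapLd with hφLdef
  set fZ := LinearMap.charpoly φL with hfZdef
  have hfZmonic : fZ.Monic := LinearMap.charpoly_monic φL
  have hfkill : ∀ v : V, (aeval ((T : V →ₗ[ℝ] V)) (fZ.map (Int.castRingHom ℝ))) v = 0 := by
    have hbmem : ∀ i, bas i ∈ Ld := by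
      intro i
      show bas i ∈ L
      rw [hbL]
      exact AddSubgroup.subset_closure (Set.mem_range_self i)
    have hzero : (aeval ((T : V →ₗ[ℝ] V)) (fZ.map (Int.castRingHom ℝ))) = 0 := by
      apply Module.Basis.ext bas
      intro i
      have h1 := SplitAux.evZ_restrict T Ld hmapLd fZ ⟨bas i, hbmem i⟩
      rw [h1, ← hφLdef, LinearMap.aeval_self_charpoly φL]
      rfl
    intro v
    rw [hzero]
    rfl
  -- rational polynomials
  set evQ : Polynomial ℚ → (V →ₗ[ℝ] V) :=
    fun P => aeval ((T : V →ₗ[ℝ] V)) (P.map (algebraMap ℚ ℝ)) with hevQ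
  have hevQZ : ∀ Z : Polynomial ℤ,
      evQ (Z.map (algebraMap ℤ ℚ)) = aeval ((T : V →ₗ[ℝ] V)) (Z.map (Int.castRingHom ℝ)) := by
    intro Z
    rw [hevQ]
    simp only [Polynomial.map_map]
    congr 2
  have hevQmul : ∀ P Q : Polynomial ℚ, ∀ v : V, evQ (P * Q) v = evQ P (evQ Q v) := by
    intro P Q v
    rw [hevQ]
    simp only [Polynomial.map_mul, map_mul]
    rfl
  have hevQadd : ∀ P Q : Polynomial ℚ, ∀ v : V, evQ (P + Q) v = evQ P v + evQ Q v := by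
    intro P Q v
    rw [hevQ]
    simp only [Polynomial.map_add, map_add]
    rfl
  have hevQcommT : ∀ P : Polynomial ℚ, ∀ v : V, evQ P (T v) = T (evQ P v) := by
    intro P v
    have hm : evQ P * (T : V →ₗ[ℝ] V) = (T : V →ₗ[ℝ] V) * evQ P := by
      rw [hevQ]
      calc aeval ((T : V →ₗ[ℝ] V)) (P.map (algebraMap ℚ ℝ)) * (T : V →ₗ[ℝ] V)
          = aeval ((T : V →ₗ[ℝ] V)) (P.map (algebraMap ℚ ℝ) * X) := by
            rw [map_mul, Polynomial.aeval_X]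
        _ = aeval ((T : V →ₗ[ℝ] V)) (X * P.map (algebraMap ℚ ℝ)) := by rw [mul_comm]
        _ = (T : V →ₗ[ℝ] V) * aeval ((T : V →ₗ[ℝ] V)) (P.map (algebraMap ℚ ℝ)) := by
            rw [map_mul, Polynomial.aeval_X]
    have := congrArg (fun f : V →ₗ[ℝ] V => f v) hm
    simpa using this
  have hevQcommTsymm : ∀ P : Polynomial ℚ, ∀ v : V, evQ P (T.symm v) = T.symm (evQ P v) := by
    intro P v
    apply T.injective
    rw [← hevQcommT P (T.symm v)]
    simp
  -- the factor g
  set fQ := fZ.map (algebraMap ℤ ℚ) with hfQdef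
  have hfQmonic : fQ.Monic := hfZmonic.map _
  have hfkillQ : ∀ v : V, evQ fQ v = 0 := by
    intro v
    rw [hfQdef, hevQZ]
    exact hfkill v
  obtain ⟨g, h, hgm, hgh, hcop, hg0, hdvdg⟩ := SplitAux.unit_part fQ hfQmonic
  obtain ⟨G, hGm, hGe⟩ := SplitAux.gaussLift fZ hfZmonic g hgm ⟨h, hgh.symm⟩
  have hG0 : G.coeff 0 = 1 ∨ G.coeff 0 = -1 := by
    have hc : (G.coeff 0 : ℚ) = g.coeff 0 := by rw [← hGe, Polynomial.coeff_map]; rfl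
    rcases hg0 with h1 | h1 <;> [left; right] <;>
      · have : (G.coeff 0 : ℚ) = _ := hc.trans (by rw [h1])
        exact_mod_cast this
  -- Claim 1 : L ∩ ker (evQ g) ⊆ Kd
  have hstep : ∀ w, w ∈ L → evQ g w = 0 → T.symm w ∈ L ∧ evQ g (T.symm w) = 0 := by
    intro w hwL hwg
    have hker : evQ g (T.symm w) = 0 := by
      rw [hevQcommTsymm, hwg, map_zero]
    refine ⟨?_, hker⟩
    -- decompose G = X * G.divX + C (G.coeff 0)
    have hGdec : X * G.divX + C (G.coeff 0) = G := Polynomial.X_mul_divX_add G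
    have hGw : (aeval ((T : V →ₗ[ℝ] V)) (G.map (Int.castRingHom ℝ))) w = 0 := by
      rw [← hevQZ, hGe, hwg]
    rw [← hGdec] at hGw
    rw [Polynomial.map_add, Polynomial.map_mul, Polynomial.map_X, Polynomial.map_C] at hGw
    rw [map_add, map_mul, Polynomial.aeval_X, Polynomial.aeval_C] at hGw
    have hrel : T ((aeval ((T : V →ₗ[ℝ] V)) (G.divX.map (Int.castRingHom ℝ))) w)
        + G.coeff 0 • w = 0 := by
      simpa [Module.algebraMap_end_apply] using hGw
    set u := (aeval ((T : V →ₗ[ℝ] V)) (G.divX.map (Int.castRingHom ℝ))) w with hu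
    have huL : u ∈ L := SplitAux.evZ_mem T L hTL G.divX hwL
    rcases hG0 with hc | hc
    · -- G.coeff 0 = 1 : T u + w = 0, so T.symm w = -u
      rw [hc] at hrel
      have hw : w = T (-u) := by
        have : T u + w = 0 := by simpa using hrel
        have := eq_neg_of_add_eq_zero_right this
        simp [this]
      have : T.symm w = -u := by rw [hw]; simp
      rw [this]
      exact neg_mem huL
    · -- G.coeff 0 = -1 : T u - w = 0, so T.symm w = u
      rw [hc] at hrel
      have hw : w = T u := by
        have h2 : T u - w = 0 := by
          have h1 := hrel
          rw [neg_smul, one_smul] at h1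
          simpa [sub_eq_add_neg] using h1
        have := sub_eq_zero.mp h2
        simp [← this]
      have : T.symm w = u := by rw [hw]; simp
      rw [this]
      exact huL
  have hiter : ∀ j : ℕ, ∀ v, v ∈ L → evQ g v = 0 →
      ((T.symm ^ j) v ∈ L ∧ evQ g ((T.symm ^ j) v) = 0) := by
    intro j
    induction j with
    | zero => intro v hv hg'; simpa using ⟨hv, hg'⟩
    | succ j ih =>
      intro v hv hg'
      obtain ⟨h1, h2⟩ := ih v hv hg'
      have h3 := hstep _ h1 h2
      rw [pow_succ']
      exact h3
  have claim1 : ∀ v, v ∈ L → evQ g v = 0 → v ∈ Kd := by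
    intro v hvL hvg
    rw [hKdmem]
    intro i
    rcases le_or_gt 0 i with hi | hi
    · obtain ⟨n, rfl⟩ := Int.eq_ofNat_of_zero_le hi
      rw [zpow_natCast]
      exact SplitAux.equivpow_mem L T hTL n v hvL
    · obtain ⟨n, hn⟩ : ∃ n : ℕ, i = -(n : ℤ) := ⟨i.natAbs, by omega⟩
      subst hn
      rw [zpow_neg, zpow_natCast, ← inv_pow]
      have hTi : T⁻¹ = T.symm := rfl
      rw [hTi]
      exact (hiter n v hvL hvg).1
  -- Claim 2 : Kd ⊆ ker (evQ g)
  have claim2 : ∀ v ∈ Kd, evQ g v = 0 := by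
    intro v hv
    set qQ := q.map (algebraMap ℤ ℚ) with hqQdef
    set m := EuclideanDomain.gcd qQ fQ with hmdef
    have hqQkill : evQ qQ v = 0 := by
      rw [hqQdef, hevQZ]
      exact hqkill v hv
    have hmv : evQ m v = 0 := by
      have hbez := EuclideanDomain.gcd_eq_gcd_ab qQ fQ
      rw [hmdef, hbez, hevQadd]
      rw [mul_comm qQ _, mul_comm fQ _, hevQmul, hevQmul, hqQkill, hfkillQ, map_zero, map_zero,
        add_zero]
    have hm0 : m ≠ 0 := by
      intro h0
      have := (EuclideanDomain.gcd_eq_zero_iff.mp h0).2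
      exact hfQmonic.ne_zero this
    have hmg : m ∣ g := by
      refine hdvdg m hm0 (EuclideanDomain.gcd_dvd_right qQ fQ) ?_
      intro p hpm hpirr hpd
      exact SplitAux.predDvd q hqmonic hq0 p hpm
        (hpd.trans (EuclideanDomain.gcd_dvd_left qQ fQ))
    obtain ⟨e, he⟩ := hmg
    rw [he, mul_comm, hevQmul, hmv, map_zero]
  -- K ∩ ker (evQ g) = Kd
  have claimF2 : ∀ k, k ∈ K → evQ g k = 0 → k ∈ Kd := by
    intro k hk hkg
    obtain ⟨i, hi⟩ := hunion k hk
    -- find n : ℕ with (T ^ n) k ∈ L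
    have hn : ∃ n : ℕ, (T ^ n) k ∈ L := by
      rcases le_or_gt 0 i with h0 | h0
      · obtain ⟨n, rfl⟩ := Int.eq_ofNat_of_zero_le h0
        rw [zpow_natCast] at hi
        exact ⟨n, hi⟩
      · refine ⟨0, ?_⟩
        obtain ⟨n, hneq⟩ : ∃ n : ℕ, i = -(n : ℤ) := ⟨i.natAbs, by omega⟩
        subst hneq
        have h1 : T ^ ((n : ℤ)) * T ^ (-(n:ℤ)) = 1 := by
          rw [← zpow_add T]
          simp
        have h2 : k = (T ^ (n : ℕ)) ((T ^ (-(n:ℤ) : ℤ)) k) := by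
          have : (T ^ (n : ℕ)) ((T ^ (-(n:ℤ) : ℤ)) k)
              = (T ^ ((n : ℤ)) * T ^ (-(n:ℤ))) k := by
            rw [zpow_natCast]
            rfl
          rw [this, h1]
          rfl
        rw [h2]
        simpa using SplitAux.equivpow_mem L T hTL n _ hi
    obtain ⟨n, hnL⟩ := hn
    -- (T^n) k as linear-map power
    have hps : ∀ (nn : ℕ) (w : V), (T ^ nn) w = (((T : V →ₗ[ℝ] V)) ^ nn) w := by
      intro nn w
      rw [LinearEquiv.pow_apply, Module.End.pow_apply]
      clear hnL
      induction nn with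
      | zero => rfl
      | succ nn ih => rw [Function.iterate_succ', Function.iterate_succ']; simp [ih]
    have hcommn : ∀ (nn : ℕ) (P : Polynomial ℚ) (w : V),
        evQ P ((T ^ nn) w) = (T ^ nn) (evQ P w) := by
      intro nn P
      induction nn with
      | zero => intro w; simp
      | succ nn ih =>
        intro w
        rw [pow_succ']
        have h1 : (T * T ^ nn) w = T ((T ^ nn) w) := rfl
        have h2 : (T * T ^ nn) (evQ P w) = T ((T ^ nn) (evQ P w)) := rfl
        rw [h1, h2, hevQcommT, ih]
    have hkg2 : evQ g ((T ^ n) k) = 0 := by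
      rw [hcommn n g k, hkg, map_zero]
    have hmemKd : (T ^ n) k ∈ Kd := claim1 _ hnL hkg2
    -- pull back
    have hsymmpow : ∀ (nn : ℕ), ∀ w ∈ Kd, (T.symm ^ nn) w ∈ Kd :=
      fun nn w hw => SplitAux.equivpow_mem Kd T.symm hTKd' nn w hw
    have hback : k = (T.symm ^ n) ((T ^ n) k) := by
      have h1 : T.symm ^ n * T ^ n = 1 := by
        have hTi : T.symm = T⁻¹ := rfl
        rw [hTi, inv_pow]
        exact inv_mul_cancel _
      have : (T.symm ^ n) ((T ^ n) k) = (T.symm ^ n * T ^ n) k := rfl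
      rw [this, h1]
      rfl
    rw [hback]
    exact hsymmpow n _ hmemKd
  -- Bezout coefficients
  obtain ⟨aP, bP, hab⟩ := hcop
  -- projections
  have hone : ∀ v : V, evQ (aP * g) v + evQ (bP * h) v = v := by
    intro v
    rw [← hevQadd, hab, hevQ]
    simp
  have hpd_ker : ∀ v : V, evQ g (evQ (bP * h) v) = 0 := by
    intro v
    rw [← hevQmul]
    have : g * (bP * h) = bP * fQ := by rw [← hgh]; ring
    rw [this, hevQmul, hfkillQ, map_zero]
  have hpc_ker : ∀ v : V, evQ h (evQ (aP * g) v) = 0 := by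
    intro v
    rw [← hevQmul]
    have : h * (aP * g) = aP * fQ := by rw [← hgh]; ring
    rw [this, hevQmul, hfkillQ, map_zero]
  have hproj_id : ∀ v : V, evQ g v = 0 → evQ (bP * h) v = v := by
    intro v hv
    have h1 : evQ (aP * g) v = 0 := by rw [hevQmul, hv, map_zero]
    have := hone v
    rw [h1, zero_add] at this
    exact this
  have hprojc_id : ∀ v : V, evQ h v = 0 → evQ (bP * h) v = 0 := by
    intro v hv
    rw [hevQmul, hv, map_zero]
  -- the subgroups
  set K' : AddSubgroup V := K ⊓ AddSubgroup.comap (evQ (bP * h)).toAddMonoidHom K with hK'def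
  set Kc : AddSubgroup V := K ⊓ (LinearMap.ker (evQ h)).toAddSubgroup with hKcdef
  have hK'mem : ∀ v : V, v ∈ K' ↔ v ∈ K ∧ evQ (bP * h) v ∈ K := by
    intro v
    rw [hK'def]
    simp [AddSubgroup.mem_inf, AddSubgroup.mem_comap]
  have hKcmem : ∀ v : V, v ∈ Kc ↔ v ∈ K ∧ evQ h v = 0 := by
    intro v
    rw [hKcdef]
    simp [AddSubgroup.mem_inf, LinearMap.mem_ker]
  -- facts
  have hKdK' : Kd ≤ K' := by
    intro v hv
    rw [hK'mem]
    have h1 : evQ (bP * h) v = v := hproj_id v (claim2 v hv)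
    rw [h1]
    exact ⟨hKdK hv, hKdK hv⟩
  have hK'K : K' ≤ K := inf_le_left
  have hKcK' : Kc ≤ K' := by
    intro v hv
    rw [hKcmem] at hv
    rw [hK'mem]
    refine ⟨hv.1, ?_⟩
    rw [hprojc_id v hv.2]
    exact K.zero_mem
  have hK'inv : ∀ v ∈ K', T v ∈ K' ∧ T.symm v ∈ K' := by
    intro v hv
    rw [hK'mem] at hv
    constructor
    · rw [hK'mem]
      refine ⟨(hTK v).mp hv.1, ?_⟩
      rw [hevQcommT]
      exact (hTK _).mp hv.2
    · rw [hK'mem]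
      refine ⟨hTsymmK v hv.1, ?_⟩
      rw [hevQcommTsymm]
      exact hTsymmK _ hv.2
  have hKcinv : ∀ v ∈ Kc, T v ∈ Kc ∧ T.symm v ∈ Kc := by
    intro v hv
    rw [hKcmem] at hv
    constructor
    · rw [hKcmem]
      refine ⟨(hTK v).mp hv.1, ?_⟩
      rw [hevQcommT, hv.2, map_zero]
    · rw [hKcmem]
      refine ⟨hTsymmK v hv.1, ?_⟩
      rw [hevQcommTsymm, hv.2, map_zero]
  have hKdKc_bot : Kd ⊓ Kc = ⊥ := by
    rw [eq_bot_iff]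
    intro v hv
    rw [AddSubgroup.mem_inf] at hv
    have h1 : evQ (bP * h) v = v := hproj_id v (claim2 v hv.1)
    have h2 : evQ (bP * h) v = 0 := hprojc_id v ((hKcmem v).mp hv.2).2
    rw [h1] at h2
    simpa using h2
  have hKdKc_sup : Kd ⊔ Kc = K' := by
    apply le_antisymm
    · exact sup_le hKdK' hKcK'
    · intro v hv
      rw [hK'mem] at hv
      have hd : evQ (bP * h) v ∈ Kd := by
        apply claimF2 _ hv.2
        exact hpd_ker v
      have hc : v - evQ (bP * h) v ∈ Kc := by
        rw [hKcmem]
        refine ⟨K.sub_mem hv.1 hv.2, ?_⟩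
        have h1 : v - evQ (bP * h) v = evQ (aP * g) v :=
          (eq_sub_of_add_eq (hone v)).symm
        rw [h1]
        exact hpc_ker v
      have : v = evQ (bP * h) v + (v - evQ (bP * h) v) := by abel
      rw [this]
      exact AddSubgroup.add_mem_sup hd hc
  have htfKd : ∀ k ∈ K, ∀ n : ℕ, n ≠ 0 → n • k ∈ Kd → k ∈ Kd := by
    intro k hk n hn hnk
    apply claimF2 k hk
    have h1 : evQ g (n • k) = 0 := claim2 _ hnk
    rw [map_nsmul] at h1
    have h2 : (n : ℝ) • evQ g k = 0 := by
      rw [Nat.cast_smul_eq_nsmul]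
      exact h1
    rcases smul_eq_zero.mp h2 with h3 | h3
    · exact absurd (Nat.cast_eq_zero.mp h3) hn
    · exact h3
  have htfKc : ∀ k ∈ K, ∀ n : ℕ, n ≠ 0 → n • k ∈ Kc → k ∈ Kc := by
    intro k hk n hn hnk
    rw [hKcmem] at hnk ⊢
    refine ⟨hk, ?_⟩
    have h1 := hnk.2
    rw [map_nsmul] at h1
    have h2 : (n : ℝ) • evQ h k = 0 := by
      rw [Nat.cast_smul_eq_nsmul]
      exact h1
    rcases smul_eq_zero.mp h2 with h3 | h3
    · exact absurd (Nat.cast_eq_zero.mp h3) hn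
    · exact h3
  have hindex : (K'.addSubgroupOf K).index ≠ 0 := by
    set BH := bP * h with hBHdef
    set N : ℕ := ∏ i ∈ BH.support, (BH.coeff i).den with hNdef
    have hNpos : 0 < N := Finset.prod_pos (fun i _ => (BH.coeff i).pos)
    have hNne : (N : ℤ) ≠ 0 := by exact_mod_cast hNpos.ne'
    have hcoefInt : ∀ i : ℕ, ∃ z : ℤ, ((N:ℚ)) * BH.coeff i = (z:ℚ) := by
      intro i
      by_cases hi : i ∈ BH.support
      · have hdvd : (BH.coeff i).den ∣ N := Finset.dvd_prod_of_mem _ hi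
        obtain ⟨kk, hkk⟩ := hdvd
        refine ⟨kk * (BH.coeff i).num, ?_⟩
        have hdenne : (((BH.coeff i).den : ℚ)) ≠ 0 := by
          exact_mod_cast (BH.coeff i).pos.ne'
        have hden : BH.coeff i * ((BH.coeff i).den : ℚ) = (BH.coeff i).num :=
          ((div_eq_iff hdenne).mp (Rat.num_div_den (BH.coeff i))).symm
        have hden' : ((BH.coeff i).den : ℚ) * BH.coeff i = (BH.coeff i).num := by
          rw [mul_comm]; exact hden
        rw [hkk]
        push_cast
        rw [mul_comm ((BH.coeff i).den : ℚ) ((kk:ℚ)), mul_assoc, hden']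
      · rw [Polynomial.notMem_support_iff.mp hi]
        exact ⟨0, by simp⟩
    have hZlift : ∃ Z : Polynomial ℤ, Z.map (algebraMap ℤ ℚ) = C ((N:ℚ)) * BH := by
      rw [← Polynomial.mem_lifts]
      rw [Polynomial.lifts_iff_coeff_lifts]
      intro n
      rw [Polynomial.coeff_C_mul]
      obtain ⟨z, hz⟩ := hcoefInt n
      exact ⟨z, hz.symm⟩
    obtain ⟨Z, hZe⟩ := hZlift
    have hsmul_eq : ∀ v : V, evQ (C ((N:ℚ)) * BH) v = (N:ℤ) • evQ BH v := by
      intro v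
      rw [hevQ]
      simp only [Polynomial.map_mul, Polynomial.map_C, map_mul, Polynomial.aeval_C]
      have : (algebraMap ℚ ℝ) ((N:ℚ)) = ((N:ℝ)) := by push_cast; rfl
      rw [this]
      show ((algebraMap ℝ (Module.End ℝ V)) ((N:ℝ)) * _) v = _
      rw [Module.End.mul_apply, Module.algebraMap_end_apply]
      have h2 : ((N:ℝ)) = (((N:ℤ) : ℝ)) := by push_cast; rfl
      rw [h2, Int.cast_smul_eq_zsmul]
    have hNsmK : ∀ kk, kk ∈ K → (N:ℤ) • evQ BH kk ∈ K := by
      intro kk hkk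
      rw [← hsmul_eq, ← hZe, hevQZ]
      exact SplitAux.evZ_mem T K (fun v hv => (hTK v).mp hv) Z hkk
    have hNKd : ∀ kk, kk ∈ K → (N:ℤ) • evQ BH kk ∈ Kd := by
      intro kk hkk
      apply claimF2 _ (hNsmK kk hkk)
      rw [map_zsmul]
      rw [hBHdef, hpd_ker kk, smul_zero]
    -- basis of KdM
    set cb : Module.Basis (Module.Free.ChooseBasisIndex ℤ ↥KdM) ℤ ↥KdM :=
      Module.Free.chooseBasis ℤ ↥KdM with hcb
    haveI : NeZero N := ⟨hNpos.ne'⟩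
    set ψk : ↥K → ↥KdM := fun kk => ⟨(N:ℤ) • evQ BH ↑kk, hNKd ↑kk kk.2⟩ with hψk
    have hψkadd : ∀ x y : ↥K, ψk (x + y) = ψk x + ψk y := by
      intro x y
      apply Subtype.ext
      show (N:ℤ) • evQ BH ((x:V) + (y:V)) = (N:ℤ) • evQ BH ↑x + (N:ℤ) • evQ BH ↑y
      rw [map_add, smul_add]
    set χ : ↥K →+ (Module.Free.ChooseBasisIndex ℤ ↥KdM → ZMod N) :=
      AddMonoidHom.mk' (fun kk => fun i => ((cb.repr (ψk kk)) i : ZMod N)) (by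
        intro x y
        funext i
        simp only [hψkadd x y, map_add, Finsupp.add_apply]
        push_cast
        rfl) with hχ
    have hkerχ : K'.addSubgroupOf K = χ.ker := by
      ext x
      rw [AddSubgroup.mem_addSubgroupOf, AddMonoidHom.mem_ker]
      constructor
      · intro hx
        have hπK : evQ BH ↑x ∈ K := ((hK'mem ↑x).mp hx).2
        have hπKd : evQ BH ↑x ∈ Kd := claimF2 _ hπK (by rw [hBHdef, hpd_ker])
        have hψeq : ψk x = (N:ℤ) • (⟨evQ BH ↑x, hπKd⟩ : ↥KdM) := by
          apply Subtype.ext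
          rfl
        funext i
        show ((cb.repr (ψk x)) i : ZMod N) = 0
        rw [hψeq, map_zsmul]
        rw [ZMod.intCast_zmod_eq_zero_iff_dvd]
        show ((N:ℤ)) ∣ (N:ℤ) • (cb.repr ⟨evQ BH ↑x, hπKd⟩) i
        rw [smul_eq_mul]
        exact dvd_mul_right _ _
      · intro hx
        have hdvdall : ∀ i, ∃ z : ℤ, (cb.repr (ψk x)) i = (N:ℤ) * z := by
          intro i
          have h1 : ((cb.repr (ψk x)) i : ZMod N) = 0 := congrFun hx i
          obtain ⟨z, hz⟩ := (ZMod.intCast_zmod_eq_zero_iff_dvd _ _).mp h1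
          exact ⟨z, hz⟩
        choose z hz using hdvdall
        set w : ↥KdM := ∑ i, z i • cb i with hw
        have hNw : (N:ℤ) • w = ψk x := by
          rw [hw, Finset.smul_sum]
          have : ∀ i ∈ Finset.univ, (N:ℤ) • z i • cb i = (cb.repr (ψk x)) i • cb i := by
            intro i _
            rw [smul_smul, ← hz i]
          rw [Finset.sum_congr rfl this]
          exact cb.sum_repr (ψk x)
        have hcoe : (N:ℤ) • (w : V) = (N:ℤ) • evQ BH ↑x := by
          have := congrArg (fun t : ↥KdM => (t : V)) hNw
          exact this
        have hπw : evQ BH ↑x = (w : V) := (smul_right_injective V hNne hcoe).symm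
        rw [hK'mem]
        refine ⟨x.2, ?_⟩
        rw [hπw]
        exact hKdK w.2
    rw [hkerχ, AddSubgroup.index_ker]
    haveI : Finite ((Module.Free.ChooseBasisIndex ℤ ↥KdM) → ZMod N) := by
      infer_instance
    have : 0 < Nat.card χ.range := Nat.card_pos
    omega
  exact ⟨K', Kc, hKdK', hK'K, hKcK', hindex, hK'inv, hKcinv, hKdKc_bot, hKdKc_sup, htfKd, htfKc⟩
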